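/- Let w be a sequence of n distinct integers and let λ be the common shape of the insertion and recording tableaux obtained by applying the RSK algorithm to w. Then the length of the longest increasing subsequence of w equals λ_1, and the length of the longest decreasing subsequence of w equals the number of rows of λ (i.e., λ'_1). -/

import Mathlib

/-- RSK row insertion of `x` into a row: returns the new row and the bumped entry. -/
def rowInsert : List ℕ → ℕ → List ℕ × Option ℕ
  | [], x => ([x], none)
  | y :: ys, x =>
      if x < y then (x :: ys, some y)
      else
        let p := rowInsert ys x
        (y :: p.1, p.2)

/-- RSK insertion of `x` into a tableau (list of rows). -/
def tabInsert : List (List ℕ) → ℕ → List (List ℕ)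
  | [], x => [[x]]
  | r :: rs, x =>
      match rowInsert r x with
      | (r', none) => r' :: rs
      | (r', some b) => r' :: tabInsert rs b

/-- The RSK insertion tableau of a word `w`. -/
def insTab (w : List ℕ) : List (List ℕ) := w.foldl tabInsert []

namespace Sch

def row1step (r : List ℕ) (x : ℕ) : List ℕ := (rowInsert r x).1

lemma rowInsert_append (r : List ℕ) (x : ℕ) (h : ∀ y ∈ r, ¬ x < y) :
    rowInsert r x = (r ++ [x], none) := by
  induction r with
  | nil => rfl
  | cons y ys ih =>
      have hy : ¬ x < y := h y (by simp)
      simp only [rowInsert, if_neg hy]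
      rw [ih (fun z hz => h z (by simp [hz]))]
      simp

lemma rowInsert_bump (r : List ℕ) (x : ℕ) (h : ∃ y ∈ r, x < y) :
    ∃ a y b, r = a ++ y :: b ∧ (∀ w ∈ a, ¬ x < w) ∧ x < y ∧
      rowInsert r x = (a ++ x :: b, some y) := by
  induction r with
  | nil => simp at h
  | cons z ys ih =>
      by_cases hz : x < z
      · exact ⟨[], z, ys, rfl, by simp, hz, by simp [rowInsert, hz]⟩
      · obtain ⟨y, hy, hxy⟩ := h
        rcases List.mem_cons.1 hy with rfl | hy
        · exact absurd hxy hz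
        · obtain ⟨a, y', b, hr, ha, hxy', hres⟩ := ih ⟨y, hy, hxy⟩
          refine ⟨z :: a, y', b, by simp [hr], ?_, hxy', ?_⟩
          · intro w hw; rcases List.mem_cons.1 hw with rfl | hw
            · exact hz
            · exact ha w hw
          · simp [rowInsert, if_neg hz, hres]

lemma sorted_concat_iff {s : List ℕ} {v : ℕ} :
    (s ++ [v]).Pairwise (· < ·) ↔ s.Pairwise (· < ·) ∧ ∀ y ∈ s, y < v := by
  simp [List.pairwise_append]

lemma getElem_mid (a b : List ℕ) (c : ℕ) : (a ++ c :: b)[a.length]'(by simp) = c := by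
  rw [List.getElem_append_right (le_refl a.length)]
  simp

lemma getElem_ne_mid (a b : List ℕ) (c d : ℕ) (i : ℕ) (hi : i < (a ++ c :: b).length)
    (hne : i ≠ a.length) : (a ++ c :: b)[i] = (a ++ d :: b)[i]'(by simp at hi ⊢; omega) := by
  rcases lt_or_gt_of_ne hne with h | h
  · rw [List.getElem_append_left h, List.getElem_append_left h]
  · obtain ⟨k, hk⟩ : ∃ k, i - a.length = k + 1 := ⟨i - a.length - 1, by omega⟩
    rw [List.getElem_append_right (le_of_lt h), List.getElem_append_right (le_of_lt h)]
    simp only [hk, List.getElem_cons_succ]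

lemma getElem_gt_mem (a b : List ℕ) (c : ℕ) (i : ℕ) (hi : i < (a ++ c :: b).length)
    (h : a.length < i) : (a ++ c :: b)[i] ∈ b := by
  rw [List.getElem_append_right (le_of_lt h)]
  obtain ⟨k, hk⟩ : ∃ k, i - a.length = k + 1 := ⟨i - a.length - 1, by omega⟩
  simp only [hk, List.getElem_cons_succ]
  exact List.getElem_mem _

/-- The patience invariant for the first row. -/
structure PInv (p r : List ℕ) : Prop where
  sorted : r.Pairwise (· < ·)
  subset : ∀ y ∈ r, y ∈ p
  wit : ∀ i (h : i < r.length), ∃ s : List ℕ, (s ++ [r[i]]).Sublist p ∧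
    (s ++ [r[i]]).Pairwise (· < ·) ∧ s.length = i
  bound : ∀ s v, (s ++ [v]).Sublist p → (s ++ [v]).Pairwise (· < ·) →
    ∃ h : s.length < r.length, r[s.length] ≤ v

lemma PInv.nil : PInv [] [] := by
  refine ⟨by simp, by simp, by simp, ?_⟩
  intro s v hs _
  simp at hs

lemma PInv.step {p r : List ℕ} (h : PInv p r) {x : ℕ} (hx : x ∉ p) :
    PInv (p ++ [x]) (row1step r x) := by
  classical
  have hsub : ∀ s : List ℕ, s.Sublist p → s.Sublist (p ++ [x]) :=
    fun s hs => hs.trans (List.sublist_append_left p [x])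
  have hsplit : ∀ s v, (s ++ [v]).Sublist (p ++ [x]) →
      (s ++ [v]).Sublist p ∨ (x = v ∧ s.Sublist p) := by
    intro s v hs
    rw [List.sublist_append_iff] at hs
    obtain ⟨t1, t2, he, h1, h2⟩ := hs
    rcases List.sublist_singleton.1 h2 with rfl | rfl
    · left; rw [List.append_nil] at he; exact he ▸ h1
    · right
      have hlen : s.length = t1.length := by
        have := congrArg List.length he; simpa using this
      obtain ⟨rfl, hv⟩ := List.append_inj he hlen
      have : v = x := by simpa using hv
      exact ⟨this.symm, h1⟩
  have hrx : ∀ y ∈ r, y ≠ x := fun y hy => fun hyx => hx (hyx ▸ h.subset y hy)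
  by_cases hbc : ∃ y ∈ r, x < y
  · -- bump case
    obtain ⟨a, y, b, hr, ha, hxy, hres⟩ := rowInsert_bump r x hbc
    have hr' : row1step r x = a ++ x :: b := by simp [row1step, hres]
    subst hr
    have halt : ∀ w ∈ a, w < x := by
      intro w hw
      have h1 : ¬ x < w := ha w hw
      have h2 : w ≠ x := hrx w (by simp [hw])
      omega
    have hsort := h.sorted
    rw [List.pairwise_append, List.pairwise_cons] at hsort
    obtain ⟨hpa, ⟨hyb, hpb⟩, hcross⟩ := hsort
    have hbgt : ∀ z ∈ b, x < z := fun z hz => hxy.trans (hyb z hz)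
    -- classification : r[i] < x → i < a.length
    have hclass : ∀ i (hi : i < (a ++ y :: b).length), (a ++ y :: b)[i] < x →
        i < a.length := by
      intro i hi hltx
      by_contra hge
      push_neg at hge
      rcases eq_or_lt_of_le hge with rfl | hgt
      · rw [getElem_mid] at hltx; omega
      · have := hbgt _ (getElem_gt_mem a b y i hi hgt)
        omega
    -- pointwise : new row is ≤ old row
    have hpoint : ∀ i (hi : i < (a ++ x :: b).length),
        (a ++ x :: b)[i] ≤ (a ++ y :: b)[i]'(by simp at hi ⊢; omega) := by
      intro i hi
      by_cases hieq : i = a.length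
      · subst hieq
        rw [getElem_mid, getElem_mid]
        omega
      · rw [getElem_ne_mid a b x y i hi hieq]
    rw [hr']
    have hlen2 : (a ++ x :: b).length = (a ++ y :: b).length := by simp
    constructor
    · -- sorted
      rw [List.pairwise_append, List.pairwise_cons]
      refine ⟨hpa, ⟨fun z hz => hbgt z hz, hpb⟩, ?_⟩
      intro w hw u hu
      rcases List.mem_cons.1 hu with rfl | hu
      · exact halt w hw
      · exact hcross w hw u (by simp [hu])
    · -- subset
      intro z hz
      rcases List.mem_append.1 hz with hz | hz
      · exact List.mem_append_left _ (h.subset z (by simp [hz]))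
      · rcases List.mem_cons.1 hz with rfl | hz
        · simp
        · exact List.mem_append_left _ (h.subset z (by simp [hz]))
    · -- witnesses
      intro i hi
      by_cases hieq : i = a.length
      · subst hieq
        rw [getElem_mid]
        rcases Nat.eq_zero_or_pos a.length with hz | hpos
        · exact ⟨[], by simpa using List.sublist_append_right p [x], by simp, by simp [hz]⟩
        · have ha1 : a.length - 1 < (a ++ y :: b).length := by simp; omega
          obtain ⟨s, hs1, hs2, hs3⟩ := h.wit (a.length - 1) ha1
          have hget : (a ++ y :: b)[a.length - 1]'ha1 = a[a.length - 1]'(by omega) :=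
            List.getElem_append_left (by omega)
          rw [hget] at hs1 hs2
          have hax : a[a.length - 1]'(by omega) < x := halt _ (List.getElem_mem _)
          refine ⟨s ++ [a[a.length - 1]'(by omega)], hs1.append (List.Sublist.refl [x]), ?_,
            by simp [hs3]; omega⟩
          rw [sorted_concat_iff]
          refine ⟨hs2, ?_⟩
          intro z hz
          rcases List.mem_append.1 hz with hz | hz
          · have := (sorted_concat_iff.1 hs2).2 z hz
            omega
          · simp at hz; omega
      · obtain ⟨s, hs1, hs2, hs3⟩ := h.wit i (by omega)
        rw [getElem_ne_mid a b x y i hi hieq]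
        exact ⟨s, hsub _ hs1, hs2, hs3⟩
    · -- bound
      intro s v hsv hsort2
      rcases hsplit s v hsv with hsv' | ⟨hvx, hsp⟩
      · obtain ⟨hl, hle⟩ := h.bound s v hsv' hsort2
        exact ⟨by omega, le_trans (hpoint s.length (by omega)) hle⟩
      · subst hvx
        have hslt : ∀ z ∈ s, z < x := (sorted_concat_iff.1 hsort2).2
        rcases (List.eq_nil_or_concat' s) with rfl | ⟨s₀, u, rfl⟩
        · refine ⟨by simp, ?_⟩
          rcases Nat.eq_zero_or_pos a.length with hz | hpos
          · have : a = [] := List.eq_nil_of_length_eq_zero hz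
            subst this; simp
          · have h0 : (a ++ x :: b)[0]'(by simp) = a[0]'(by omega) :=
              List.getElem_append_left hpos
            simp only [List.length_nil]
            rw [h0]
            exact le_of_lt (halt _ (List.getElem_mem _))
        · have hsort3 := (sorted_concat_iff.1 hsort2).1
          obtain ⟨hl, hle⟩ := h.bound s₀ u hsp hsort3
          have hux : u < x := hslt u (by simp)
          have hlt : s₀.length < a.length := hclass s₀.length hl (by omega)
          have hslen : (s₀ ++ [u]).length = s₀.length + 1 := by simp
          rw [hslen]
          refine ⟨by simp; omega, ?_⟩
          rcases eq_or_lt_of_le (Nat.succ_le_of_lt hlt) with he | hlt2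
          · have he' : s₀.length + 1 = a.length := he
            simp only [he']
            rw [getElem_mid]
          · rw [List.getElem_append_left hlt2]
            exact le_of_lt (halt _ (List.getElem_mem _))
  · -- append case
    push_neg at hbc
    have happ := rowInsert_append r x (by intro y hy; have := hbc y hy; omega)
    have hr' : row1step r x = r ++ [x] := by simp [row1step, happ]
    have hlt : ∀ y ∈ r, y < x := by
      intro y hy
      have h1 := hbc y hy
      have h2 := hrx y hy
      omega
    rw [hr']
    constructor
    · rw [sorted_concat_iff]; exact ⟨h.sorted, hlt⟩
    · intro z hz
      rcases List.mem_append.1 hz with hz | hz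
      · exact List.mem_append_left _ (h.subset z hz)
      · simp at hz; simp [hz]
    · intro i hi
      simp only [List.length_append, List.length_singleton] at hi
      rcases lt_or_ge i r.length with hir | hir
      · obtain ⟨s, hs1, hs2, hs3⟩ := h.wit i hir
        rw [List.getElem_append_left hir]
        exact ⟨s, hsub _ hs1, hs2, hs3⟩
      · have hieq : i = r.length := by omega
        subst hieq
        have hgx : (r ++ [x])[r.length]'(by simp) = x := getElem_mid r [] x
        rw [hgx]
        rcases (List.eq_nil_or_concat' r) with rfl | ⟨r₀, u, hre⟩
        · exact ⟨[], by simpa using List.sublist_append_right p [x], by simp, by simp⟩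
        · have hrpos : 0 < r.length := by rw [hre]; simp
          obtain ⟨s, hs1, hs2, hs3⟩ := h.wit (r.length - 1) (by omega)
          have hux : r[r.length - 1]'(by omega) < x := hlt _ (List.getElem_mem _)
          refine ⟨s ++ [r[r.length - 1]'(by omega)], hs1.append (List.Sublist.refl [x]), ?_,
            by simp [hs3]; omega⟩
          rw [sorted_concat_iff]
          refine ⟨hs2, ?_⟩
          intro z hz
          rcases List.mem_append.1 hz with hz | hz
          · have := (sorted_concat_iff.1 hs2).2 z hz; omega
          · simp at hz; omega
    · intro s v hsv hsort2
      rcases hsplit s v hsv with hsv' | ⟨hvx, hsp⟩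
      · obtain ⟨hl, hle⟩ := h.bound s v hsv' hsort2
        refine ⟨by simp; omega, ?_⟩
        rw [List.getElem_append_left hl]
        exact hle
      · subst hvx
        have hslt : ∀ z ∈ s, z < x := (sorted_concat_iff.1 hsort2).2
        rcases (List.eq_nil_or_concat' s) with rfl | ⟨s₀, u, rfl⟩
        · refine ⟨by simp, ?_⟩
          rcases (List.eq_nil_or_concat' r) with rfl | ⟨r₀, u, hre⟩
          · simp
          · have hrpos : 0 < r.length := by rw [hre]; simp
            have h0 : (r ++ [x])[0]'(by simp) = r[0]'(by omega) :=
              List.getElem_append_left hrpos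
            simp only [List.length_nil]
            rw [h0]
            exact le_of_lt (hlt _ (List.getElem_mem _))
        · have hsort3 := (sorted_concat_iff.1 hsort2).1
          obtain ⟨hl, hle⟩ := h.bound s₀ u hsp hsort3
          have hslen : (s₀ ++ [u]).length = s₀.length + 1 := by simp
          rw [hslen]
          refine ⟨by simp; omega, ?_⟩
          rcases eq_or_lt_of_le (Nat.succ_le_of_lt hl) with he | hlt2
          · have he' : s₀.length + 1 = r.length := he
            simp only [he']
            rw [getElem_mid r [] x]
          · rw [List.getElem_append_left hlt2]
            exact le_of_lt (hlt _ (List.getElem_mem _))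

lemma pinv_row1 (w : List ℕ) (hw : w.Nodup) : PInv w (List.foldl row1step [] w) := by
  induction w using List.reverseRecOn with
  | nil => exact PInv.nil
  | append_singleton p x ih =>
      have hnd : p.Nodup := (List.nodup_append.1 hw).1
      have hx : x ∉ p := fun hxp => (List.nodup_append.1 hw).2.2 x hxp x (by simp) rfl
      have := (ih hnd).step hx
      simpa using this


lemma tabInsert_headD (T : List (List ℕ)) (x : ℕ) :
    (tabInsert T x).headD [] = row1step (T.headD []) x := by
  cases T with
  | nil => simp [tabInsert, row1step, rowInsert]
  | cons r rs =>
      rcases h : rowInsert r x with ⟨r', ob⟩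
      cases ob <;> simp [tabInsert, h, row1step]

lemma foldl_headD (w : List ℕ) : ∀ T : List (List ℕ),
    (List.foldl tabInsert T w).headD [] = List.foldl row1step (T.headD []) w := by
  induction w with
  | nil => intro T; rfl
  | cons x w ih =>
      intro T
      simp only [List.foldl_cons, ih, tabInsert_headD]

lemma insTab_headD (w : List ℕ) :
    (insTab w).headD [] = List.foldl row1step [] w := foldl_headD w []

lemma part1_greatest (w : List ℕ) (hw : w.Nodup) :
    IsGreatest {k | ∃ s : List ℕ, s.Sublist w ∧ s.Pairwise (· < ·) ∧ s.length = k}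
      (List.foldl row1step [] w).length := by
  have h := pinv_row1 w hw
  set r := List.foldl row1step [] w with hr
  constructor
  · rcases Nat.eq_zero_or_pos r.length with hz | hpos
    · exact ⟨[], List.nil_sublist _, by simp, by simp [hz]⟩
    · obtain ⟨s, hs1, hs2, hs3⟩ := h.wit (r.length - 1) (by omega)
      exact ⟨s ++ [r[r.length - 1]'(by omega)], hs1, hs2, by simp [hs3]; omega⟩
  · rintro k ⟨s, hsub, hsort, rfl⟩
    rcases List.eq_nil_or_concat' s with rfl | ⟨s₀, u, rfl⟩
    · simp
    · obtain ⟨hl, _⟩ := h.bound s₀ u hsub hsort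
      simp
      omega

lemma bump_sorted {a b : List ℕ} {x y : ℕ} (hsort : (a ++ y :: b).Pairwise (· < ·))
    (ha : ∀ w ∈ a, w < x) (hxy : x < y) : (a ++ x :: b).Pairwise (· < ·) := by
  rw [List.pairwise_append, List.pairwise_cons] at hsort ⊢
  obtain ⟨hpa, ⟨hyb, hpb⟩, hcross⟩ := hsort
  refine ⟨hpa, ⟨fun z hz => hxy.trans (hyb z hz), hpb⟩, ?_⟩
  intro w hw u hu
  rcases List.mem_cons.1 hu with rfl | hu
  · exact ha w hw
  · exact hcross w hw u (by simp [hu])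

/-- structural invariants of insertion tableaux. -/
structure TInv (T : List (List ℕ)) : Prop where
  sorted : ∀ r ∈ T, r.Pairwise (· < ·)
  ne : ∀ r ∈ T, r ≠ []
  heads : List.IsChain (· < ·) (T.map fun r => r.headD 0)

lemma headD_append_ne {r : List ℕ} (x : ℕ) (h : r ≠ []) :
    (r ++ [x]).headD 0 = r.headD 0 := by
  cases r with
  | nil => exact absurd rfl h
  | cons a l => simp

lemma headD_mem {r : List ℕ} (h : r ≠ []) : r.headD 0 ∈ r := by
  cases r with
  | nil => exact absurd rfl h
  | cons a l => simp

lemma perm_helper (a b F : List ℕ) (x y : ℕ) :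
    ((a ++ x :: b) ++ (y :: F)).Perm (x :: ((a ++ y :: b) ++ F)) := by
  rw [List.perm_iff_count]
  intro c
  simp [List.count_append, List.count_cons]
  omega

lemma perm_helper2 (r F : List ℕ) (x : ℕ) :
    ((r ++ [x]) ++ F).Perm (x :: (r ++ F)) := by
  rw [List.perm_iff_count]
  intro c
  simp [List.count_append, List.count_cons]
  omega

def fhead (T : List (List ℕ)) (x : ℕ) : ℕ :=
  match T with
  | [] => x
  | r :: _ => min x (r.headD 0)

lemma tabInsert_main (T : List (List ℕ)) (x : ℕ) (h : TInv T)
    (hnd : (x :: T.flatten).Nodup) :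
    ∃ r' T', tabInsert T x = r' :: T' ∧ TInv (r' :: T') ∧
      (tabInsert T x).flatten.Perm (x :: T.flatten) ∧
      r'.headD 0 = fhead T x := by
  induction T generalizing x with
  | nil =>
      exact ⟨[x], [], rfl, ⟨by simp, by simp, by simp⟩, by simp [tabInsert], by simp [fhead]⟩
  | cons r rs ih =>
      have hxr : x ∉ r := by
        have := (List.nodup_cons.1 hnd).1
        simp only [List.flatten_cons] at this
        intro hc; exact this (List.mem_append_left _ hc)
      have hrne : r ≠ [] := h.ne r (by simp)
      have hrsort : r.Pairwise (· < ·) := h.sorted r (by simp)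
      by_cases hbc : ∃ y ∈ r, x < y
      · -- bump case
        obtain ⟨a, y, b, hre, ha, hxy, hres⟩ := rowInsert_bump r x hbc
        have halt : ∀ w ∈ a, w < x := by
          intro w hw
          have h1 : ¬ x < w := ha w hw
          have h2 : w ≠ x := by
            intro hc; subst hc; exact hxr (by simp [hre, hw])
          omega
        have htab : tabInsert (r :: rs) x = (a ++ x :: b) :: tabInsert rs y := by
          simp [tabInsert, hres]
        have hTrs : TInv rs :=
          ⟨fun r2 h2 => h.sorted r2 (by simp [h2]), fun r2 h2 => h.ne r2 (by simp [h2]),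
            (List.isChain_cons.1 h.heads).2⟩
        have hndrs : (y :: rs.flatten).Nodup := by
          have h2 := (List.nodup_cons.1 hnd).2
          simp only [List.flatten_cons] at h2
          rw [List.nodup_append] at h2
          exact List.nodup_cons.2 ⟨fun hc => h2.2.2 y (by simp [hre]) y hc rfl, h2.2.1⟩
        obtain ⟨r₂, T₂, htab2, hTInv2, hperm2, hhead2⟩ := ih y hTrs hndrs
        have hnewsort : (a ++ x :: b).Pairwise (· < ·) := bump_sorted (hre ▸ hrsort) halt hxy
        have hheadnew : (a ++ x :: b).headD 0 = min x (r.headD 0) := by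
          cases a with
          | nil =>
              simp only [List.nil_append] at hre ⊢
              subst hre
              simp [min_eq_left (le_of_lt hxy)]
          | cons w a' =>
              have hwx : w < x := halt w (by simp)
              subst hre
              simp [min_eq_right (le_of_lt hwx)]
        have hhead1 : (a ++ x :: b).headD 0 ≤ x := by rw [hheadnew]; exact min_le_left _ _
        have hheadr : (a ++ x :: b).headD 0 ≤ r.headD 0 := by
          rw [hheadnew]; exact min_le_right _ _
        have hlink : (a ++ x :: b).headD 0 < r₂.headD 0 := by
          rw [hhead2]
          cases rs with
          | nil => simp only [fhead]; omega
          | cons r2 rs' =>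
              have hchain := List.isChain_cons.1 h.heads
              have : r.headD 0 < r2.headD 0 := by
                have := hchain.1 (r2.headD 0) (by simp)
                exact this
              simp only [fhead]
              have hy_r : x < y := hxy
              refine lt_min (by omega) (by omega)
        refine ⟨a ++ x :: b, tabInsert rs y, htab, ?_, ?_, ?_⟩
        · refine ⟨?_, ?_, ?_⟩
          · intro r3 h3
            rcases List.mem_cons.1 h3 with rfl | h3
            · exact hnewsort
            · exact hTInv2.sorted r3 (htab2 ▸ h3)
          · intro r3 h3
            rcases List.mem_cons.1 h3 with rfl | h3
            · simp
            · exact hTInv2.ne r3 (htab2 ▸ h3)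
          · rw [htab2]
            rw [List.map_cons, List.isChain_cons]
            refine ⟨?_, hTInv2.heads⟩
            intro c hc
            simp only [List.map_cons, List.head?_cons, Option.mem_def, Option.some.injEq] at hc
            subst hc
            exact hlink
        · rw [htab, hre]
          simp only [List.flatten_cons]
          exact (hperm2.append_left (a ++ x :: b)).trans (perm_helper a b rs.flatten x y)
        · simpa [fhead] using hheadnew
      · -- append case
        push_neg at hbc
        have hlt : ∀ y ∈ r, y < x := by
          intro y hy
          have h1 := hbc y hy
          have h2 : y ≠ x := fun hc => hxr (hc ▸ hy)
          omega
        have happ := rowInsert_append r x (fun y hy => by have := hlt y hy; omega)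
        have htab : tabInsert (r :: rs) x = (r ++ [x]) :: rs := by
          simp [tabInsert, happ]
        have hsortnew : (r ++ [x]).Pairwise (· < ·) := by
          rw [List.pairwise_append]
          exact ⟨hrsort, by simp, fun u hu v hv => by simp at hv; subst hv; exact hlt u hu⟩
        have hheadnew : (r ++ [x]).headD 0 = r.headD 0 := headD_append_ne x hrne
        have hheadlt : r.headD 0 < x := hlt _ (headD_mem hrne)
        refine ⟨r ++ [x], rs, htab, ⟨?_, ?_, ?_⟩, ?_, ?_⟩
        · intro r3 h3
          rcases List.mem_cons.1 h3 with rfl | h3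
          · exact hsortnew
          · exact h.sorted r3 (by simp [h3])
        · intro r3 h3
          rcases List.mem_cons.1 h3 with rfl | h3
          · simp
          · exact h.ne r3 (by simp [h3])
        · have hh := h.heads
          rw [List.map_cons] at hh ⊢
          rw [hheadnew]
          exact hh
        · rw [htab, List.flatten_cons, List.flatten_cons]
          exact perm_helper2 r rs.flatten x
        · simp only [fhead, hheadnew]
          omega

inductive KStep : List ℕ → List ℕ → Prop
  | A (u v : List ℕ) (x y z : ℕ) (h1 : x < y) (h2 : y < z) :
      KStep (u ++ [y, z, x] ++ v) (u ++ [y, x, z] ++ v)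
  | B (u v : List ℕ) (x y z : ℕ) (h1 : x < y) (h2 : y < z) :
      KStep (u ++ [x, z, y] ++ v) (u ++ [z, x, y] ++ v)

def K : List ℕ → List ℕ → Prop := Relation.EqvGen KStep

lemma K.refl (l : List ℕ) : K l l := Relation.EqvGen.refl l
lemma K.symm {a b} (h : K a b) : K b a := Relation.EqvGen.symm _ _ h
lemma K.trans {a b c} (h1 : K a b) (h2 : K b c) : K a c := Relation.EqvGen.trans _ _ _ h1 h2
lemma K.of_step {a b} (h : KStep a b) : K a b := Relation.EqvGen.rel _ _ h

lemma KStep.cong {a b : List ℕ} (h : KStep a b) (u v : List ℕ) :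
    KStep (u ++ a ++ v) (u ++ b ++ v) := by
  cases h with
  | A u' v' x y z h1 h2 =>
      have e1 : u ++ (u' ++ [y, z, x] ++ v') ++ v = (u ++ u') ++ [y, z, x] ++ (v' ++ v) := by
        simp [List.append_assoc]
      have e2 : u ++ (u' ++ [y, x, z] ++ v') ++ v = (u ++ u') ++ [y, x, z] ++ (v' ++ v) := by
        simp [List.append_assoc]
      rw [e1, e2]
      exact KStep.A _ _ x y z h1 h2
  | B u' v' x y z h1 h2 =>
      have e1 : u ++ (u' ++ [x, z, y] ++ v') ++ v = (u ++ u') ++ [x, z, y] ++ (v' ++ v) := by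
        simp [List.append_assoc]
      have e2 : u ++ (u' ++ [z, x, y] ++ v') ++ v = (u ++ u') ++ [z, x, y] ++ (v' ++ v) := by
        simp [List.append_assoc]
      rw [e1, e2]
      exact KStep.B _ _ x y z h1 h2

lemma K.cong {a b : List ℕ} (h : K a b) (u v : List ℕ) : K (u ++ a ++ v) (u ++ b ++ v) := by
  induction h with
  | rel a b hab => exact K.of_step (hab.cong u v)
  | refl a => exact K.refl _
  | symm a b _ ih => exact ih.symm
  | trans a b c _ _ ih1 ih2 => exact ih1.trans ih2

lemma K.cong_left {a b : List ℕ} (h : K a b) (u : List ℕ) : K (u ++ a) (u ++ b) := by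
  have := h.cong u []
  simpa using this

lemma K.cong_right {a b : List ℕ} (h : K a b) (v : List ℕ) : K (a ++ v) (b ++ v) := by
  have := h.cong [] v
  simpa using this

/-- move `x` left through an increasing run `b` preceded by `c`, all bigger than `x`. -/
lemma klemA (b : List ℕ) (c x : ℕ) (hxc : x < c) (hcb : ∀ z ∈ b, c < z)
    (hb : b.Pairwise (· < ·)) : K (c :: b ++ [x]) (c :: x :: b) := by
  induction b generalizing c with
  | nil => exact K.refl _
  | cons z b' ih =>
      have hcz : c < z := hcb z (by simp)
      have ihz : K (z :: b' ++ [x]) (z :: x :: b') := by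
        refine ih z (hxc.trans hcz) ?_ ?_
        · intro w hw
          exact (List.pairwise_cons.1 hb).1 w hw
        · exact (List.pairwise_cons.1 hb).2
      have step1 : K (c :: z :: b' ++ [x]) (c :: z :: x :: b') := by
        have := ihz.cong_left [c]
        simpa using this
      have step2 : KStep (c :: z :: x :: b') (c :: x :: z :: b') := by
        have := KStep.A [] b' x c z hxc hcz
        simpa using this
      exact (by simpa using step1 : K (c :: z :: b' ++ [x]) _).trans (K.of_step step2)

/-- move `y` left through an increasing run `a`, all smaller than `x`, with `x < y`
following. -/
lemma klemB (a : List ℕ) (x y : ℕ) (t : List ℕ) (ha : ∀ w ∈ a, w < x) (hxy : x < y)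
    (hs : a.Pairwise (· < ·)) : K (a ++ y :: x :: t) (y :: (a ++ x :: t)) := by
  induction a with
  | nil => exact K.refl _
  | cons w a' ih =>
      have hwx : w < x := ha w (by simp)
      have ih' : K (a' ++ y :: x :: t) (y :: (a' ++ x :: t)) := by
        refine ih (fun z hz => ha z (by simp [hz])) ?_
        exact (List.pairwise_cons.1 hs).2
      have step1 : K (w :: (a' ++ y :: x :: t)) (w :: y :: (a' ++ x :: t)) := by
        have := ih'.cong_left [w]
        simpa using this
      -- now swap w and y at the front: pattern [w, y, h] ~ [y, w, h]
      have hfront : ∃ h rest, a' ++ x :: t = h :: rest ∧ w < h ∧ h < y := by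
        cases a' with
        | nil => exact ⟨x, t, rfl, hwx, hxy⟩
        | cons w' a'' =>
            refine ⟨w', a'' ++ x :: t, rfl, (List.pairwise_cons.1 hs).1 w' (by simp), ?_⟩
            exact lt_trans (ha w' (by simp)) hxy
      obtain ⟨h, rest, he, hwh, hhy⟩ := hfront
      have step2 : KStep (w :: y :: h :: rest) (y :: w :: h :: rest) := by
        have := KStep.B [] rest w h y hwh hhy
        simpa using this
      rw [he] at step1
      have goal' : K (w :: (a' ++ y :: x :: t)) (y :: w :: (a' ++ x :: t)) := by
        rw [he]
        exact step1.trans (K.of_step step2)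
      simpa using goal'

/-- the key single-row lemma: bumping `y` out of a row is a Knuth move. -/
lemma row_bump_knuth (a b : List ℕ) (x y : ℕ) (hsort : (a ++ y :: b).Pairwise (· < ·))
    (ha : ∀ w ∈ a, w < x) (hxy : x < y) :
    K ((a ++ y :: b) ++ [x]) (y :: (a ++ x :: b)) := by
  rw [List.pairwise_append, List.pairwise_cons] at hsort
  obtain ⟨hpa, ⟨hyb, hpb⟩, hcross⟩ := hsort
  have h1 : K (y :: b ++ [x]) (y :: x :: b) := klemA b y x hxy hyb hpb
  have h2 : K (a ++ (y :: b ++ [x])) (a ++ (y :: x :: b)) := h1.cong_left a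
  have h3 : K (a ++ y :: x :: b) (y :: (a ++ x :: b)) := klemB a x y b ha hxy hpa
  refine K.trans ?_ h3
  simpa using h2


def rowWord (T : List (List ℕ)) : List ℕ := T.reverse.flatten

lemma rowWord_cons (r : List ℕ) (rs : List (List ℕ)) :
    rowWord (r :: rs) = rowWord rs ++ r := by
  simp [rowWord]

lemma tabInsert_knuth (T : List (List ℕ)) (x : ℕ) (h : TInv T)
    (hnd : (x :: T.flatten).Nodup) :
    K (rowWord T ++ [x]) (rowWord (tabInsert T x)) := by
  induction T generalizing x with
  | nil => exact K.refl _
  | cons r rs ih =>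
      have hxr : x ∉ r := by
        have := (List.nodup_cons.1 hnd).1
        simp only [List.flatten_cons] at this
        intro hc; exact this (List.mem_append_left _ hc)
      have hrne : r ≠ [] := h.ne r (by simp)
      have hrsort : r.Pairwise (· < ·) := h.sorted r (by simp)
      by_cases hbc : ∃ y ∈ r, x < y
      · obtain ⟨a, y, b, hre, ha, hxy, hres⟩ := rowInsert_bump r x hbc
        have halt : ∀ w ∈ a, w < x := by
          intro w hw
          have h1 : ¬ x < w := ha w hw
          have h2 : w ≠ x := by
            intro hc; subst hc; exact hxr (by simp [hre, hw])
          omega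
        have htab : tabInsert (r :: rs) x = (a ++ x :: b) :: tabInsert rs y := by
          simp [tabInsert, hres]
        have hTrs : TInv rs :=
          ⟨fun r2 h2 => h.sorted r2 (by simp [h2]), fun r2 h2 => h.ne r2 (by simp [h2]),
            (List.isChain_cons.1 h.heads).2⟩
        have hndrs : (y :: rs.flatten).Nodup := by
          have h2 := (List.nodup_cons.1 hnd).2
          simp only [List.flatten_cons] at h2
          rw [List.nodup_append] at h2
          exact List.nodup_cons.2 ⟨fun hc => h2.2.2 y (by simp [hre]) y hc rfl, h2.2.1⟩
        have hih := ih y hTrs hndrs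
        have step1 : K (rowWord rs ++ ((a ++ y :: b) ++ [x]))
            (rowWord rs ++ (y :: (a ++ x :: b))) :=
          (row_bump_knuth a b x y (hre ▸ hrsort) halt hxy).cong_left (rowWord rs)
        have step2 : K ((rowWord rs ++ [y]) ++ (a ++ x :: b))
            (rowWord (tabInsert rs y) ++ (a ++ x :: b)) :=
          hih.cong_right (a ++ x :: b)
        rw [htab, rowWord_cons, rowWord_cons, hre]
        have e1 : (rowWord rs ++ (a ++ y :: b)) ++ [x] =
            rowWord rs ++ ((a ++ y :: b) ++ [x]) := by simp [List.append_assoc]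
        have e2 : rowWord rs ++ (y :: (a ++ x :: b)) =
            (rowWord rs ++ [y]) ++ (a ++ x :: b) := by simp [List.append_assoc]
        rw [e1]
        exact (step1.trans (e2 ▸ step2 : _)).trans (K.refl _)
      · push_neg at hbc
        have hlt : ∀ y ∈ r, y < x := by
          intro y hy
          have h1 := hbc y hy
          have h2 : y ≠ x := fun hc => hxr (hc ▸ hy)
          omega
        have happ := rowInsert_append r x (fun y hy => by have := hlt y hy; omega)
        have htab : tabInsert (r :: rs) x = (r ++ [x]) :: rs := by
          simp [tabInsert, happ]
        rw [htab, rowWord_cons, rowWord_cons]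
        rw [← List.append_assoc]
        exact K.refl _

lemma insTab_concat (p : List ℕ) (x : ℕ) :
    insTab (p ++ [x]) = tabInsert (insTab p) x := by
  simp [insTab, List.foldl_append]

lemma insTab_all (w : List ℕ) (hw : w.Nodup) :
    TInv (insTab w) ∧ (insTab w).flatten.Perm w ∧ K w (rowWord (insTab w)) := by
  induction w using List.reverseRecOn with
  | nil => exact ⟨⟨by simp [insTab], by simp [insTab], by simp [insTab]⟩, by simp [insTab], K.refl _⟩
  | append_singleton p x ih =>
      have hnd : p.Nodup := (List.nodup_append.1 hw).1
      have hx : x ∉ p := fun hxp => (List.nodup_append.1 hw).2.2 x hxp x (by simp) rfl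
      obtain ⟨hT, hperm, hK⟩ := ih hnd
      have hndx : (x :: (insTab p).flatten).Nodup := by
        refine List.nodup_cons.2 ⟨fun hc => hx (hperm.mem_iff.1 hc), hperm.nodup_iff.2 hnd⟩
      obtain ⟨r', T', htab, hTInv', hperm', _⟩ := tabInsert_main (insTab p) x hT hndx
      rw [insTab_concat]
      refine ⟨htab ▸ hTInv', ?_, ?_⟩
      · exact hperm'.trans ((hperm.cons x).trans (List.perm_append_singleton x p).symm)
      · exact (hK.cong_right [x]).trans (tabInsert_knuth (insTab p) x hT hndx)

def Dec (k : ℕ) (w : List ℕ) : Prop :=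
  ∃ s : List ℕ, s.Sublist w ∧ s.Pairwise (· > ·) ∧ s.length = k

lemma dec_move (u v m m' : List ℕ)
    (hrep : ∀ s2 : List ℕ, s2.Sublist m → s2.Pairwise (· > ·) →
      ∃ s2' : List ℕ, s2'.Sublist m' ∧ s2'.Pairwise (· > ·) ∧ s2'.length = s2.length ∧
        (∀ c ∈ s2', ∃ d ∈ s2, c ≤ d) ∧ (∀ c ∈ s2', ∃ d ∈ s2, d ≤ c))
    (k : ℕ) (h : Dec k (u ++ m ++ v)) : Dec k (u ++ m' ++ v) := by
  obtain ⟨s, hs, hsort, hlen⟩ := h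
  rw [List.append_assoc, List.sublist_append_iff] at hs
  obtain ⟨s1, s23, rfl, hs1, hs23⟩ := hs
  rw [List.sublist_append_iff] at hs23
  obtain ⟨s2, s3, rfl, hs2, hs3⟩ := hs23
  rw [← List.append_assoc] at hsort hlen
  rw [List.pairwise_append, List.pairwise_append] at hsort
  obtain ⟨⟨h1, h2, h12⟩, h3, h123⟩ := hsort
  obtain ⟨s2', hsub', hsort', hlen', hub, hlb⟩ := hrep s2 hs2 h2
  refine ⟨s1 ++ s2' ++ s3, ?_, ?_, by simp at hlen ⊢; omega⟩
  · rw [List.append_assoc, List.append_assoc]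
    exact (hs1.append (hsub'.append hs3))
  · rw [List.pairwise_append, List.pairwise_append]
    refine ⟨⟨h1, hsort', ?_⟩, h3, ?_⟩
    · intro a ha c hc
      obtain ⟨d, hd, hcd⟩ := hub c hc
      exact lt_of_le_of_lt hcd (h12 a ha d hd)
    · intro a ha e he
      rcases List.mem_append.1 ha with ha | ha
      · exact h123 a (List.mem_append_left _ ha) e he
      · obtain ⟨d, hd, hdc⟩ := hlb a ha
        exact lt_of_lt_of_le (h123 d (List.mem_append_right _ hd) e he) hdc

lemma sublist3 {s2 : List ℕ} {a b c : ℕ} (h : s2.Sublist [a, b, c]) :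
    s2 = [] ∨ s2 = [a] ∨ s2 = [b] ∨ s2 = [c] ∨ s2 = [a, b] ∨ s2 = [a, c] ∨
      s2 = [b, c] ∨ s2 = [a, b, c] := by
  rw [List.sublist_cons_iff] at h
  rcases h with h | ⟨r, rfl, h⟩
  · rw [List.sublist_cons_iff] at h
    rcases h with h | ⟨r, rfl, h⟩
    · rcases List.sublist_singleton.1 h with rfl | rfl <;> tauto
    · rcases List.sublist_singleton.1 h with rfl | rfl <;> tauto
  · rw [List.sublist_cons_iff] at h
    rcases h with h | ⟨r', rfl, h⟩
    · rcases List.sublist_singleton.1 h with rfl | rfl <;> tauto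
    · rcases List.sublist_singleton.1 h with rfl | rfl <;> tauto

lemma id_rep {m' s2 : List ℕ} (hsub : s2.Sublist m') (hsort : s2.Pairwise (· > ·)) :
    ∃ s2' : List ℕ, s2'.Sublist m' ∧ s2'.Pairwise (· > ·) ∧ s2'.length = s2.length ∧
      (∀ c ∈ s2', ∃ d ∈ s2, c ≤ d) ∧ (∀ c ∈ s2', ∃ d ∈ s2, d ≤ c) :=
  ⟨s2, hsub, hsort, rfl, fun c hc => ⟨c, hc, le_rfl⟩, fun c hc => ⟨c, hc, le_rfl⟩⟩

lemma dec_KStep {a b : List ℕ} (h : KStep a b) (k : ℕ) : Dec k a ↔ Dec k b := by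
  cases h with
  | A u v x y z h1 h2 =>
      constructor
      · apply dec_move
        intro s2 hs2 hsort
        rcases sublist3 hs2 with rfl | rfl | rfl | rfl | rfl | rfl | rfl | rfl
        · exact id_rep (List.nil_sublist _) hsort
        · exact id_rep (by simp) hsort
        · exact id_rep (by simp) hsort
        · exact id_rep (by simp) hsort
        · simp at hsort; omega
        · exact id_rep (List.sublist_append_left [y, x] [z]) hsort
        · refine ⟨[y, x], List.sublist_append_left [y, x] [z], by simp; omega,
            rfl, ?_, ?_⟩
          · intro c hc
            simp at hc
            exact ⟨z, by simp, by omega⟩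
          · intro c hc
            simp at hc
            exact ⟨x, by simp, by omega⟩
        · simp at hsort; omega
      · apply dec_move
        intro s2 hs2 hsort
        rcases sublist3 hs2 with rfl | rfl | rfl | rfl | rfl | rfl | rfl | rfl
        · exact id_rep (List.nil_sublist _) hsort
        · exact id_rep (by simp) hsort
        · exact id_rep (by simp) hsort
        · exact id_rep (by simp) hsort
        · exact id_rep (List.Sublist.cons₂ y (by simp)) hsort
        · simp at hsort; omega
        · simp at hsort; omega
        · simp at hsort; omega
  | B u v x y z h1 h2 =>
      constructor
      · apply dec_move
        intro s2 hs2 hsort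
        rcases sublist3 hs2 with rfl | rfl | rfl | rfl | rfl | rfl | rfl | rfl
        · exact id_rep (List.nil_sublist _) hsort
        · exact id_rep (by simp) hsort
        · exact id_rep (by simp) hsort
        · exact id_rep (by simp) hsort
        · simp at hsort; omega
        · simp at hsort; omega
        · exact id_rep (List.Sublist.cons₂ z (by simp)) hsort
        · simp at hsort; omega
      · apply dec_move
        intro s2 hs2 hsort
        rcases sublist3 hs2 with rfl | rfl | rfl | rfl | rfl | rfl | rfl | rfl
        · exact id_rep (List.nil_sublist _) hsort
        · exact id_rep (by simp) hsort
        · exact id_rep (by simp) hsort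
        · exact id_rep (by simp) hsort
        · refine ⟨[z, y], (List.Sublist.refl [z, y]).cons x, by simp; omega,
            rfl, ?_, ?_⟩
          · intro c hc
            simp at hc
            exact ⟨z, by simp, by omega⟩
          · intro c hc
            simp at hc
            exact ⟨x, by simp, by omega⟩
        · exact id_rep ((List.Sublist.refl [z, y]).cons x) hsort
        · simp at hsort; omega
        · simp at hsort; omega

lemma dec_K {a b : List ℕ} (h : K a b) (k : ℕ) : Dec k a ↔ Dec k b := by
  induction h with
  | rel a b hab => exact dec_KStep hab k
  | refl a => rfl
  | symm a b _ ih => exact ih.symm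
  | trans a b c _ _ ih1 ih2 => exact ih1.trans ih2

lemma heads_sublist (L : List (List ℕ)) (h : ∀ r ∈ L, r ≠ []) :
    (L.map (fun r => r.headD 0)).Sublist L.flatten := by
  induction L with
  | nil => simp
  | cons r rs ih =>
      have hne := h r (by simp)
      cases r with
      | nil => exact absurd rfl hne
      | cons a t =>
          simp only [List.map_cons, List.flatten_cons, List.headD_cons, List.cons_append]
          exact (ih (fun r2 h2 => h r2 (by simp [h2]))).trans
            (List.sublist_append_right t _) |>.cons₂ a

lemma dec_le_rows (L : List (List ℕ)) (h : ∀ r ∈ L, r.Pairwise (· < ·)) :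
    ∀ s : List ℕ, s.Sublist L.flatten → s.Pairwise (· > ·) → s.length ≤ L.length := by
  induction L with
  | nil => intro s hs _; simp at hs; simp [hs]
  | cons r rs ih =>
      intro s hs hsort
      rw [List.flatten_cons, List.sublist_append_iff] at hs
      obtain ⟨s1, s2, rfl, hs1, hs2⟩ := hs
      have hlen2 := ih (fun r2 h2 => h r2 (by simp [h2])) s2 hs2
        ((List.pairwise_append.1 hsort).2.1)
      have hps1lt : s1.Pairwise (· < ·) := List.Pairwise.sublist hs1 (h r (by simp))
      have hps1gt : s1.Pairwise (· > ·) := (List.pairwise_append.1 hsort).1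
      have hlen1 : s1.length ≤ 1 := by
        match s1, hps1lt, hps1gt with
        | [], _, _ => simp
        | [c], _, _ => simp
        | c1 :: c2 :: t, hlt, hgt =>
            have h1 : c1 < c2 := (List.pairwise_cons.1 hlt).1 c2 (by simp)
            have h2 : c1 > c2 := (List.pairwise_cons.1 hgt).1 c2 (by simp)
            omega
      simp only [List.length_append, List.length_cons]
      omega

lemma rows_isGreatest (T : List (List ℕ)) (h : TInv T) :
    IsGreatest {k | Dec k (rowWord T)} T.length := by
  constructor
  · refine ⟨(T.map (fun r => r.headD 0)).reverse, ?_, ?_, by simp⟩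
    · rw [← List.map_reverse]
      exact heads_sublist T.reverse (fun r hr => h.ne r (List.mem_reverse.1 hr))
    · rw [List.pairwise_reverse]
      have hp : (T.map (fun r => r.headD 0)).Pairwise (· < ·) :=
        List.isChain_iff_pairwise.1 h.heads
      exact hp
  · rintro k ⟨s, hs, hsort, rfl⟩
    have := dec_le_rows T.reverse
      (fun r hr => h.sorted r (List.mem_reverse.1 hr)) s hs hsort
    simpa using this

end Sch

/-- Schensted's theorem: for a word `w` of distinct integers, the longest increasing
subsequence of `w` has length `λ₁` (the first part of the RSK shape of `w`), and the
longest decreasing subsequence has length the number of rows of the shape. -/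
theorem stmt9 (w : List ℕ) (hw : w.Nodup) :
    sSup {k | ∃ s : List ℕ, s.Sublist w ∧ s.Pairwise (· < ·) ∧ s.length = k} =
      ((insTab w).headD []).length ∧
    sSup {k | ∃ s : List ℕ, s.Sublist w ∧ s.Pairwise (· > ·) ∧ s.length = k} =
      (insTab w).length := by
  constructor
  · rw [Sch.insTab_headD]
    exact (Sch.part1_greatest w hw).csSup_eq
  · obtain ⟨hT, hperm, hK⟩ := Sch.insTab_all w hw
    have hset : {k | ∃ s : List ℕ, s.Sublist w ∧ s.Pairwise (· > ·) ∧ s.length = k} =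
        {k | Sch.Dec k (Sch.rowWord (insTab w))} := by
      ext k
      exact Sch.dec_K hK k
    rw [hset]
    exact (Sch.rows_isGreatest (insTab w) hT).csSup_eq
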